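/- For every η-admissible permutation σ, den(σ) = denh(π_η(σ^{-1})); that is, Denert's statistic of σ equals Han's Denert statistic of the associated multiset permutation. -/

import Mathlib

open Finset

noncomputable section
open scoped Classical

/-- 0-based block index of position `i` (0-based) with respect to the composition
`η` with `r` parts: the number of complete blocks that end at or before position `i`. -/
def blk (r : ℕ) (η : ℕ → ℕ) (i : ℕ) : ℕ :=
  ((Finset.range r).filter (fun k => ∑ j ∈ Finset.range (k + 1), η j ≤ i)).card

/-- Descent set of a word of length `n` (0-based positions `i` with `w i > w (i+1)`). -/
def desSet (n : ℕ) (w : Fin n → ℕ) : Finset (Fin n) :=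
  Finset.univ.filter (fun i => ∃ h : i.1 + 1 < n, w ⟨i.1 + 1, h⟩ < w i)

/-- Descent number. -/
def des (n : ℕ) (w : Fin n → ℕ) : ℕ := (desSet n w).card

/-- Major index (descents counted in 1-based positions). -/
def maj (n : ℕ) (w : Fin n → ℕ) : ℕ := ∑ i ∈ desSet n w, (i.1 + 1)

/-- Excedance set of a word w.r.t. the trivial word of `η`. -/
def excSet (r : ℕ) (η : ℕ → ℕ) (n : ℕ) (w : Fin n → ℕ) : Finset (Fin n) :=
  Finset.univ.filter (fun i => blk r η i.1 < w i)

/-- Excedance number. -/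
def exc (r : ℕ) (η : ℕ → ℕ) (n : ℕ) (w : Fin n → ℕ) : ℕ := (excSet r η n w).card

/-- Weak inversions of the exceeding subword. -/
def imvE (r : ℕ) (η : ℕ → ℕ) (n : ℕ) (w : Fin n → ℕ) : ℕ :=
  (Finset.univ.filter (fun p : Fin n × Fin n => p.1 < p.2 ∧
    blk r η p.1.1 < w p.1 ∧ blk r η p.2.1 < w p.2 ∧ w p.2 ≤ w p.1)).card

/-- Inversions of the non-exceeding subword. -/
def invN (r : ℕ) (η : ℕ → ℕ) (n : ℕ) (w : Fin n → ℕ) : ℕ :=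
  (Finset.univ.filter (fun p : Fin n × Fin n => p.1 < p.2 ∧
    ¬ blk r η p.1.1 < w p.1 ∧ ¬ blk r η p.2.1 < w p.2 ∧ w p.2 < w p.1)).card

/-- Han's Denert statistic on multiset permutations. -/
def denh (r : ℕ) (η : ℕ → ℕ) (n : ℕ) (w : Fin n → ℕ) : ℕ :=
  (∑ i ∈ excSet r η n w, (i.1 + 1)) + imvE r η n w + invN r η n w

/-- The set `S_η` of multiset permutations: all rearrangements of the trivial word. -/
def msetPerms (r : ℕ) (η : ℕ → ℕ) (n : ℕ) : Finset (Fin n → ℕ) :=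
  (Finset.univ : Finset (Equiv.Perm (Fin n))).image (fun σ i => blk r η (σ i).1)

/-- `η`-admissible permutations: `Des(σ) ⊆ Des(η)`. -/
def admissible (r : ℕ) (η : ℕ → ℕ) (n : ℕ) (σ : Equiv.Perm (Fin n)) : Prop :=
  ∀ i : Fin n, ∀ h : i.1 + 1 < n, σ ⟨i.1 + 1, h⟩ < σ i → blk r η i.1 < blk r η (i.1 + 1)

/-- The multiset permutation `π_η(σ⁻¹)` associated with `σ ∈ S_n`. -/
def wordOf (r : ℕ) (η : ℕ → ℕ) (n : ℕ) (σ : Equiv.Perm (Fin n)) : Fin n → ℕ :=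
  fun j => blk r η ((σ⁻¹ j).1)

/-- The set `I_σ = {j : π_η(σ⁻¹(j)) > π_η(j)}`. -/
def Iset (r : ℕ) (η : ℕ → ℕ) (n : ℕ) (σ : Equiv.Perm (Fin n)) : Finset (Fin n) :=
  Finset.univ.filter (fun j => blk r η j.1 < blk r η ((σ⁻¹ j).1))

def iexc (r : ℕ) (η : ℕ → ℕ) (n : ℕ) (σ : Equiv.Perm (Fin n)) : ℕ := (Iset r η n σ).card

/-- `N⁺_σ`. -/
def Nplus (r : ℕ) (η : ℕ → ℕ) (n : ℕ) (σ : Equiv.Perm (Fin n)) : Finset (Fin n × Fin n) :=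
  Finset.univ.filter (fun p => blk r η p.1.1 ≤ blk r η p.2.1 ∧ σ p.1 < p.2 ∧ σ⁻¹ p.2 < p.1)

/-- `N⁻_σ`. -/
def Nminus (r : ℕ) (η : ℕ → ℕ) (n : ℕ) (σ : Equiv.Perm (Fin n)) : Finset (Fin n × Fin n) :=
  Finset.univ.filter (fun p => blk r η p.2.1 < blk r η p.1.1 ∧ σ p.1 < p.2 ∧ p.1 < σ⁻¹ p.2)

/-- Denert's statistic. -/
def den (r : ℕ) (η : ℕ → ℕ) (n : ℕ) (σ : Equiv.Perm (Fin n)) : ℤ :=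
  (∑ j ∈ Iset r η n σ, (j.1 + 1) : ℕ) + (Nplus r η n σ).card - (Nminus r η n σ).card
    - iexc r η n σ


/-! ### Auxiliary lemmas -/

section Aux

variable {n r : ℕ} {η : ℕ → ℕ}

lemma blk_mono (r : ℕ) (η : ℕ → ℕ) {i j : ℕ} (h : i ≤ j) : blk r η i ≤ blk r η j := by
  apply Finset.card_le_card
  intro k hk
  simp only [Finset.mem_filter] at hk ⊢
  exact ⟨hk.1, hk.2.trans h⟩

/-- Number of positions with block value `< v`. -/
def sIdx (n r : ℕ) (η : ℕ → ℕ) (v : ℕ) : ℕ :=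
  ((Finset.univ : Finset (Fin n)).filter (fun p => blk r η p.1 < v)).card

lemma card_val_lt (n : ℕ) {m : ℕ} (hm : m ≤ n) :
    ((Finset.univ : Finset (Fin n)).filter (fun q => q.1 < m)).card = m := by
  apply Finset.card_eq_of_bijective (fun i hi => (⟨i, lt_of_lt_of_le hi hm⟩ : Fin n))
  · intro a ha
    simp only [Finset.mem_filter, Finset.mem_univ, true_and] at ha
    exact ⟨a.1, ha, Fin.ext rfl⟩
  · intro i hi
    simp only [Finset.mem_filter, Finset.mem_univ, true_and]
    exact hi
  · intro i j hi hj hij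
    exact congrArg Fin.val hij

lemma blk_lt_iff (v : ℕ) (p : Fin n) : blk r η p.1 < v ↔ p.1 < sIdx n r η v := by
  constructor
  · intro h
    have hsub : (Finset.univ : Finset (Fin n)).filter (fun q => q.1 < p.1 + 1) ⊆
        Finset.univ.filter (fun q => blk r η q.1 < v) := by
      intro q hq
      simp only [Finset.mem_filter, Finset.mem_univ, true_and] at hq ⊢
      exact lt_of_le_of_lt (blk_mono r η (Nat.lt_succ_iff.mp hq)) h
    have hc := Finset.card_le_card hsub
    rw [card_val_lt n (Nat.succ_le_of_lt p.2)] at hc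
    exact hc
  · intro h
    by_contra hc
    push_neg at hc
    have hsub : (Finset.univ : Finset (Fin n)).filter (fun q => blk r η q.1 < v) ⊆
        Finset.univ.filter (fun q => q.1 < p.1) := by
      intro q hq
      simp only [Finset.mem_filter, Finset.mem_univ, true_and] at hq ⊢
      by_contra hq2
      push_neg at hq2
      exact absurd (lt_of_lt_of_le hq (hc.trans (blk_mono r η hq2))) (lt_irrefl _)
    have hc2 := Finset.card_le_card hsub
    rw [card_val_lt n (le_of_lt p.2)] at hc2
    have : sIdx n r η v ≤ p.1 := hc2
    omega

lemma sIdx_mono {v v' : ℕ} (h : v ≤ v') : sIdx n r η v ≤ sIdx n r η v' := by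
  apply Finset.card_le_card
  intro q hq
  simp only [Finset.mem_filter, Finset.mem_univ, true_and] at hq ⊢
  exact lt_of_lt_of_le hq h

lemma count_w (σ : Equiv.Perm (Fin n)) (v : ℕ) :
    ((Finset.univ : Finset (Fin n)).filter (fun j => wordOf r η n σ j < v)).card
      = sIdx n r η v := by
  apply Finset.card_nbij' (fun j => σ⁻¹ j) (fun p => σ p)
  · intro a ha
    simp only [Finset.coe_filter, Set.mem_setOf_eq, Finset.mem_coe, Finset.mem_filter, Finset.mem_univ, true_and, wordOf] at ha ⊢
    exact (Finset.mem_filter.mp ha).2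
  · intro a ha
    simp only [Finset.coe_filter, Set.mem_setOf_eq, Finset.mem_coe, Finset.mem_filter, Finset.mem_univ, true_and, wordOf] at ha ⊢
    exact Finset.mem_filter.mpr ⟨Finset.mem_univ _, by simpa using ha⟩
  · intro a _; simp
  · intro a _; simp

lemma adm_step (σ : Equiv.Perm (Fin n)) (hσ : admissible r η n σ) (a : Fin n)
    (h : a.1 + 1 < n) (heq : blk r η a.1 = blk r η (a.1 + 1)) :
    σ a < σ ⟨a.1 + 1, h⟩ := by
  rcases lt_trichotomy (σ ⟨a.1 + 1, h⟩) (σ a) with hlt | he | hgt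
  · have := hσ a h hlt
    omega
  · have h1 := σ.injective he
    have h2 : a.1 + 1 = a.1 := congrArg Fin.val h1
    omega
  · exact hgt

lemma adm_chain (σ : Equiv.Perm (Fin n)) (hσ : admissible r η n σ) :
    ∀ d (a : Fin n) (h : a.1 + d + 1 < n), blk r η a.1 = blk r η (a.1 + d + 1) →
      σ a < σ ⟨a.1 + d + 1, h⟩ := by
  intro d
  induction d with
  | zero => intro a h heq; exact adm_step σ hσ a h heq
  | succ d ih =>
    intro a h heq
    have e1 : a.1 + (d + 1) + 1 = a.1 + d + 1 + 1 := by omega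
    rw [e1] at heq h
    have h' : a.1 + d + 1 < n := by omega
    have hm1 : blk r η a.1 ≤ blk r η (a.1 + d + 1) := blk_mono r η (by omega)
    have hm2 : blk r η (a.1 + d + 1) ≤ blk r η (a.1 + d + 1 + 1) := blk_mono r η (by omega)
    have hmid : blk r η a.1 = blk r η (a.1 + d + 1) := by omega
    have h1 := ih a h' hmid
    have heq2 : blk r η (a.1 + d + 1) = blk r η (a.1 + d + 1 + 1) := by omega
    have h2 := adm_step σ hσ ⟨a.1 + d + 1, h'⟩ h heq2
    have hfin : (⟨(⟨a.1 + d + 1, h'⟩ : Fin n).1 + 1, h⟩ : Fin n) = ⟨a.1 + (d + 1) + 1, by omega⟩ :=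
      Fin.ext (by simp; omega)
    rw [hfin] at h2
    exact lt_trans h1 h2

lemma adm_full (σ : Equiv.Perm (Fin n)) (hσ : admissible r η n σ) {a c : Fin n}
    (hac : a < c) (heq : blk r η a.1 = blk r η c.1) : σ a < σ c := by
  have hlt : a.1 < c.1 := hac
  obtain ⟨d, hd⟩ : ∃ d, c.1 = a.1 + d + 1 := ⟨c.1 - a.1 - 1, by omega⟩
  have h : a.1 + d + 1 < n := hd ▸ c.2
  have hkey := adm_chain σ hσ d a h (by rw [← hd]; exact heq)
  have hc : c = ⟨a.1 + d + 1, h⟩ := Fin.ext hd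
  rw [hc]
  exact hkey

lemma key_order (σ : Equiv.Perm (Fin n)) (hσ : admissible r η n σ) {i j : Fin n}
    (hij : i < j) :
    σ⁻¹ j < σ⁻¹ i ↔ wordOf r η n σ j < wordOf r η n σ i := by
  constructor
  · intro h
    have hle : blk r η ((σ⁻¹ j : Fin n)).1 ≤ blk r η ((σ⁻¹ i : Fin n)).1 :=
      blk_mono r η (le_of_lt h)
    rcases lt_or_eq_of_le hle with h' | h'
    · exact h'
    · have hcon := adm_full σ hσ h h'
      simp only [Equiv.Perm.coe_inv, Equiv.apply_symm_apply] at hcon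
      exact absurd (lt_trans hij hcon) (lt_irrefl _)
  · intro h
    by_contra hc
    push_neg at hc
    have hval : ((σ⁻¹ i : Fin n)).1 ≤ ((σ⁻¹ j : Fin n)).1 := hc
    have := blk_mono r η hval
    simp only [wordOf] at h
    omega

lemma fiber_fst (P : Fin n × Fin n → Prop) (i : Fin n) [DecidablePred P]
    [DecidablePred (fun j : Fin n => P (i, j))] :
    ((Finset.univ.filter P).filter (fun p : Fin n × Fin n => p.1 = i)).card
      = (Finset.univ.filter (fun j : Fin n => P (i, j))).card := by
  apply Finset.card_nbij' (fun p => p.2) (fun j => (i, j))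
  · intro p hp
    simp only [Finset.mem_coe, Finset.mem_filter, Finset.mem_univ, true_and] at hp ⊢
    obtain ⟨h1, h2⟩ := hp
    rw [← h2, Prod.mk.eta]
    exact h1
  · intro j hj
    simp only [Finset.mem_coe, Finset.mem_filter, Finset.mem_univ, true_and] at hj ⊢
    exact ⟨hj, trivial⟩
  · intro p hp
    simp only [Finset.mem_coe, Finset.mem_filter, Finset.mem_univ, true_and] at hp
    exact Prod.ext (by simp [hp.2]) rfl
  · intro j _
    rfl

lemma fiber_snd (P : Fin n × Fin n → Prop) (i : Fin n) [DecidablePred P]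
    [DecidablePred (fun j : Fin n => P (j, i))] :
    ((Finset.univ.filter P).filter (fun p : Fin n × Fin n => p.2 = i)).card
      = (Finset.univ.filter (fun j : Fin n => P (j, i))).card := by
  apply Finset.card_nbij' (fun p => p.1) (fun j => (j, i))
  · intro p hp
    simp only [Finset.mem_coe, Finset.mem_filter, Finset.mem_univ, true_and] at hp ⊢
    obtain ⟨h1, h2⟩ := hp
    rw [← h2, Prod.mk.eta]
    exact h1
  · intro j hj
    simp only [Finset.mem_coe, Finset.mem_filter, Finset.mem_univ, true_and] at hj ⊢
    exact ⟨hj, trivial⟩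
  · intro p hp
    simp only [Finset.mem_coe, Finset.mem_filter, Finset.mem_univ, true_and] at hp
    exact Prod.ext rfl (by simp [hp.2])
  · intro j _
    rfl

end Aux


section Aux2

variable {n r : ℕ} {η : ℕ → ℕ}

lemma perI (σ : Equiv.Perm (Fin n)) (i : Fin n) :
    ((Finset.univ : Finset (Fin n)).filter
        (fun j => i < j ∧ blk r η i.1 < wordOf r η n σ i ∧ wordOf r η n σ j < wordOf r η n σ i)).card
      = ((Finset.univ : Finset (Fin n)).filter
          (fun j => i < j ∧ blk r η j.1 < wordOf r η n σ i)).card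
        + (if blk r η i.1 < wordOf r η n σ i then 1 else 0)
        + ((Finset.univ : Finset (Fin n)).filter
            (fun j => j < i ∧ blk r η j.1 < wordOf r η n σ j ∧ blk r η i.1 < wordOf r η n σ i
              ∧ wordOf r η n σ i ≤ wordOf r η n σ j)).card := by
  classical
  set w := wordOf r η n σ with hw
  by_cases he : blk r η i.1 < w i
  case neg =>
    rw [if_neg he]
    have hA : ((Finset.univ : Finset (Fin n)).filter
        (fun j => i < j ∧ blk r η i.1 < w i ∧ w j < w i)) = ∅ := by
      apply Finset.filter_eq_empty_iff.mpr
      intro j _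
      tauto
    have hX : ((Finset.univ : Finset (Fin n)).filter
        (fun j => i < j ∧ blk r η j.1 < w i)) = ∅ := by
      apply Finset.filter_eq_empty_iff.mpr
      intro j _
      rintro ⟨h1, h2⟩
      have : blk r η i.1 ≤ blk r η j.1 := blk_mono r η (le_of_lt (Fin.lt_def.mp h1))
      omega
    have hZ : ((Finset.univ : Finset (Fin n)).filter
        (fun j => j < i ∧ blk r η j.1 < w j ∧ blk r η i.1 < w i ∧ w i ≤ w j)) = ∅ := by
      apply Finset.filter_eq_empty_iff.mpr
      intro j _
      tauto
    rw [hA, hX, hZ]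
    simp
  case pos =>
    rw [if_pos he]
    set v := w i with hv
    -- partition of values < v by position relative to i
    have p1 := Finset.card_filter_add_card_filter_not
      (s := (Finset.univ : Finset (Fin n)).filter (fun j => w j < v))
      (p := fun j => i < j)
    rw [Finset.filter_filter, Finset.filter_filter, count_w σ v] at p1
    have eA : ((Finset.univ : Finset (Fin n)).filter
          (fun j => i < j ∧ blk r η i.1 < v ∧ w j < v))
        = (Finset.univ : Finset (Fin n)).filter (fun j => w j < v ∧ i < j) := by
      ext j
      simp only [Finset.mem_filter, Finset.mem_univ, true_and]
      tauto
    have eQ : ((Finset.univ : Finset (Fin n)).filter (fun j => w j < v ∧ ¬ i < j))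
        = (Finset.univ : Finset (Fin n)).filter (fun j => j ≤ i ∧ w j < v) := by
      ext j
      simp only [Finset.mem_filter, Finset.mem_univ, true_and, not_lt]
      tauto
    rw [eQ] at p1
    -- partition of block-values < v by position relative to i
    have p2 := Finset.card_filter_add_card_filter_not
      (s := (Finset.univ : Finset (Fin n)).filter (fun j : Fin n => blk r η j.1 < v))
      (p := fun j => i < j)
    rw [Finset.filter_filter, Finset.filter_filter] at p2
    have hsv : ((Finset.univ : Finset (Fin n)).filter (fun j : Fin n => blk r η j.1 < v)).card
        = sIdx n r η v := rfl
    rw [hsv] at p2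
    have hXe : ((Finset.univ : Finset (Fin n)).filter (fun j : Fin n => blk r η j.1 < v ∧ i < j))
        = (Finset.univ : Finset (Fin n)).filter (fun j => i < j ∧ blk r η j.1 < v) := by
      ext j
      simp only [Finset.mem_filter, Finset.mem_univ, true_and]
      tauto
    have hJe : ((Finset.univ : Finset (Fin n)).filter (fun j : Fin n => blk r η j.1 < v ∧ ¬ i < j))
        = (Finset.univ : Finset (Fin n)).filter (fun j : Fin n => j.1 < i.1 + 1) := by
      ext j
      simp only [Finset.mem_filter, Finset.mem_univ, true_and, not_lt]
      constructor
      · rintro ⟨h1, h2⟩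
        have := Fin.le_def.mp h2
        omega
      · intro hj
        have hji : j ≤ i := Fin.le_def.mpr (by omega)
        exact ⟨lt_of_le_of_lt (blk_mono r η (Fin.le_def.mp hji)) he, hji⟩
    rw [hXe, hJe, card_val_lt n (Nat.succ_le_of_lt i.2)] at p2
    -- partition of positions ≤ i by value < v
    have p3 := Finset.card_filter_add_card_filter_not
      (s := (Finset.univ : Finset (Fin n)).filter (fun j => j ≤ i))
      (p := fun j => w j < v)
    rw [Finset.filter_filter, Finset.filter_filter] at p3
    have hIc : ((Finset.univ : Finset (Fin n)).filter (fun j => j ≤ i)).card = i.1 + 1 := by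
      have e : ((Finset.univ : Finset (Fin n)).filter (fun j => j ≤ i))
          = (Finset.univ : Finset (Fin n)).filter (fun j : Fin n => j.1 < i.1 + 1) := by
        ext j
        simp only [Finset.mem_filter, Finset.mem_univ, true_and, Fin.le_def]
        omega
      rw [e, card_val_lt n (Nat.succ_le_of_lt i.2)]
    rw [hIc] at p3
    -- split off j = i
    have p4 := Finset.card_filter_add_card_filter_not
      (s := (Finset.univ : Finset (Fin n)).filter (fun j => j ≤ i ∧ ¬ w j < v))
      (p := fun j => j = i)
    rw [Finset.filter_filter, Finset.filter_filter] at p4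
    have hSing : ((Finset.univ : Finset (Fin n)).filter (fun j => (j ≤ i ∧ ¬ w j < v) ∧ j = i))
        = {i} := by
      ext j
      simp only [Finset.mem_filter, Finset.mem_univ, true_and, Finset.mem_singleton]
      constructor
      · rintro ⟨_, h⟩
        exact h
      · intro h
        subst h
        exact ⟨⟨le_refl _, lt_irrefl _⟩, rfl⟩
    have hZe : ((Finset.univ : Finset (Fin n)).filter (fun j => (j ≤ i ∧ ¬ w j < v) ∧ ¬ j = i))
        = (Finset.univ : Finset (Fin n)).filter
            (fun j => j < i ∧ blk r η j.1 < w j ∧ blk r η i.1 < v ∧ v ≤ w j) := by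
      ext j
      simp only [Finset.mem_filter, Finset.mem_univ, true_and, not_lt]
      constructor
      · rintro ⟨⟨hle, hnw⟩, hne⟩
        have hlt : j < i := lt_of_le_of_ne hle hne
        refine ⟨hlt, ?_, he, hnw⟩
        exact lt_of_le_of_lt (blk_mono r η (le_of_lt (Fin.lt_def.mp hlt)))
          (lt_of_lt_of_le he hnw)
      · rintro ⟨h1, _, _, h4⟩
        exact ⟨⟨le_of_lt h1, h4⟩, ne_of_lt h1⟩
    rw [hSing, hZe, Finset.card_singleton] at p4
    rw [eA]
    omega

end Aux2


section Aux3

variable {n r : ℕ} {η : ℕ → ℕ}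

set_option maxHeartbeats 1000000 in
lemma wordIdentity (σ : Equiv.Perm (Fin n)) :
    ((Finset.univ : Finset (Fin n × Fin n)).filter
        (fun p => p.1 < p.2 ∧ blk r η p.1.1 < wordOf r η n σ p.1
          ∧ wordOf r η n σ p.2 < wordOf r η n σ p.1)).card
      = ((Finset.univ : Finset (Fin n × Fin n)).filter
          (fun p => p.1 < p.2 ∧ blk r η p.2.1 < wordOf r η n σ p.1)).card
        + (excSet r η n (wordOf r η n σ)).card
        + imvE r η n (wordOf r η n σ) := by
  classical
  have hY : ((Finset.univ : Finset (Fin n × Fin n)).filter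
      (fun p => p.1 < p.2 ∧ blk r η p.1.1 < wordOf r η n σ p.1
        ∧ wordOf r η n σ p.2 < wordOf r η n σ p.1)).card
      = ∑ i : Fin n, ((Finset.univ : Finset (Fin n)).filter
          (fun j => i < j ∧ blk r η i.1 < wordOf r η n σ i
            ∧ wordOf r η n σ j < wordOf r η n σ i)).card := by
    rw [Finset.card_eq_sum_card_fiberwise (f := fun p : Fin n × Fin n => p.1)
      (t := Finset.univ) (fun x _ => Finset.mem_univ _)]
    exact Finset.sum_congr rfl (fun i _ => fiber_fst _ i)
  have hX : ((Finset.univ : Finset (Fin n × Fin n)).filter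
      (fun p => p.1 < p.2 ∧ blk r η p.2.1 < wordOf r η n σ p.1)).card
      = ∑ i : Fin n, ((Finset.univ : Finset (Fin n)).filter
          (fun j => i < j ∧ blk r η j.1 < wordOf r η n σ i)).card := by
    rw [Finset.card_eq_sum_card_fiberwise (f := fun p : Fin n × Fin n => p.1)
      (t := Finset.univ) (fun x _ => Finset.mem_univ _)]
    exact Finset.sum_congr rfl (fun i _ => fiber_fst _ i)
  have hZ : imvE r η n (wordOf r η n σ)
      = ∑ i : Fin n, ((Finset.univ : Finset (Fin n)).filter
          (fun j => j < i ∧ blk r η j.1 < wordOf r η n σ j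
            ∧ blk r η i.1 < wordOf r η n σ i
            ∧ wordOf r η n σ i ≤ wordOf r η n σ j)).card := by
    unfold imvE
    rw [Finset.card_eq_sum_card_fiberwise (f := fun p : Fin n × Fin n => p.2)
      (t := Finset.univ) (fun x _ => Finset.mem_univ _)]
    exact Finset.sum_congr rfl (fun i _ => fiber_snd _ i)
  have hE : (excSet r η n (wordOf r η n σ)).card
      = ∑ i : Fin n, (if blk r η i.1 < wordOf r η n σ i then 1 else 0) := by
    unfold excSet
    rw [Finset.card_filter]
  rw [hY, hX, hZ, hE]
  rw [← Finset.sum_add_distrib]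
  rw [← Finset.sum_add_distrib]
  exact Finset.sum_congr rfl (fun i _ => perI σ i)

end Aux3

/-- for `η`-admissible `σ`, `den(σ) = denh(π_η(σ⁻¹))`. -/
theorem den_eq_denh (n r : ℕ) (η : ℕ → ℕ)
    (hpos : ∀ k < r, 0 < η k) (hsum : ∑ k ∈ Finset.range r, η k = n)
    (σ : Equiv.Perm (Fin n)) (hσ : admissible r η n σ) :
    den r η n σ = (denh r η n (wordOf r η n σ) : ℤ) := by
  classical
  -- `Iset` is the excedance set of the word
  have hIE : Iset r η n σ = excSet r η n (wordOf r η n σ) := rfl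
  -- N⁺ as a word-level set
  have hNp : (Nplus r η n σ).card = ((Finset.univ : Finset (Fin n × Fin n)).filter
      (fun p => (p.1 < p.2 ∧ ¬ blk r η p.2.1 < wordOf r η n σ p.1)
        ∧ wordOf r η n σ p.2 < wordOf r η n σ p.1)).card := by
    unfold Nplus
    apply Finset.card_nbij' (fun p => (σ p.1, p.2)) (fun p => (σ⁻¹ p.1, p.2))
    · intro p hp
      simp only [Finset.mem_coe, Finset.mem_filter, Finset.mem_univ, true_and] at hp ⊢
      obtain ⟨h1, h2, h3⟩ := hp
      have hw1 : wordOf r η n σ (σ p.1) = blk r η p.1.1 := by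
        simp [wordOf]
      refine ⟨⟨h2, ?_⟩, ?_⟩
      · rw [hw1]
        omega
      · exact (key_order σ hσ h2).mp (by simpa using h3)
    · intro p hp
      simp only [Finset.mem_coe, Finset.mem_filter, Finset.mem_univ, true_and] at hp ⊢
      obtain ⟨⟨h1, h2⟩, h3⟩ := hp
      have hww : wordOf r η n σ p.1 = blk r η ((σ⁻¹ p.1 : Fin n)).1 := rfl
      refine ⟨?_, by simpa using h1, (key_order σ hσ h1).mpr h3⟩
      rw [← hww]
      omega
    · intro p _
      simp
    · intro p _
      simp
  -- N⁻ as a word-level set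
  have hNm : (Nminus r η n σ).card = ((Finset.univ : Finset (Fin n × Fin n)).filter
      (fun p => (p.1 < p.2 ∧ ¬ wordOf r η n σ p.2 < wordOf r η n σ p.1)
        ∧ blk r η p.2.1 < wordOf r η n σ p.1)).card := by
    unfold Nminus
    apply Finset.card_nbij' (fun p => (σ p.1, p.2)) (fun p => (σ⁻¹ p.1, p.2))
    · intro p hp
      simp only [Finset.mem_coe, Finset.mem_filter, Finset.mem_univ, true_and] at hp ⊢
      obtain ⟨h1, h2, h3⟩ := hp
      have hw1 : wordOf r η n σ (σ p.1) = blk r η p.1.1 := by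
        simp [wordOf]
      have hw2 : wordOf r η n σ p.2 = blk r η ((σ⁻¹ p.2 : Fin n)).1 := rfl
      have hm : blk r η p.1.1 ≤ blk r η ((σ⁻¹ p.2 : Fin n)).1 :=
        blk_mono r η (le_of_lt (Fin.lt_def.mp h3))
      refine ⟨⟨h2, ?_⟩, ?_⟩
      · rw [hw1, hw2]
        omega
      · rw [hw1]
        exact h1
    · intro p hp
      simp only [Finset.mem_coe, Finset.mem_filter, Finset.mem_univ, true_and] at hp ⊢
      obtain ⟨⟨h1, h2⟩, h3⟩ := hp
      have hww : wordOf r η n σ p.1 = blk r η ((σ⁻¹ p.1 : Fin n)).1 := rfl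
      refine ⟨by rw [← hww]; exact h3, by simpa using h1, ?_⟩
      have hne : σ⁻¹ p.1 ≠ σ⁻¹ p.2 := fun h => (ne_of_lt h1) ((σ⁻¹).injective h)
      have hle : ¬ (σ⁻¹ p.2 < σ⁻¹ p.1) := fun hlt => h2 ((key_order σ hσ h1).mp hlt)
      exact lt_of_le_of_ne (not_lt.mp hle) hne
    · intro p _
      simp
    · intro p _
      simp
  -- word-level partitions
  have P3 := Finset.card_filter_add_card_filter_not
    (s := (Finset.univ : Finset (Fin n × Fin n)).filter (fun p => p.1 < p.2))
    (p := fun p => blk r η p.2.1 < wordOf r η n σ p.1)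
  rw [Finset.filter_filter, Finset.filter_filter] at P3
  have P4 := Finset.card_filter_add_card_filter_not
    (s := (Finset.univ : Finset (Fin n × Fin n)).filter (fun p => p.1 < p.2))
    (p := fun p => wordOf r η n σ p.2 < wordOf r η n σ p.1)
  rw [Finset.filter_filter, Finset.filter_filter] at P4
  have P1 := Finset.card_filter_add_card_filter_not
    (s := (Finset.univ : Finset (Fin n × Fin n)).filter
      (fun p => p.1 < p.2 ∧ ¬ blk r η p.2.1 < wordOf r η n σ p.1))
    (p := fun p => wordOf r η n σ p.2 < wordOf r η n σ p.1)
  rw [Finset.filter_filter, Finset.filter_filter] at P1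
  have P2 := Finset.card_filter_add_card_filter_not
    (s := (Finset.univ : Finset (Fin n × Fin n)).filter
      (fun p => p.1 < p.2 ∧ ¬ wordOf r η n σ p.2 < wordOf r η n σ p.1))
    (p := fun p => blk r η p.2.1 < wordOf r η n σ p.1)
  rw [Finset.filter_filter, Finset.filter_filter] at P2
  have eUV : ((Finset.univ : Finset (Fin n × Fin n)).filter
      (fun p => (p.1 < p.2 ∧ ¬ wordOf r η n σ p.2 < wordOf r η n σ p.1)
        ∧ ¬ blk r η p.2.1 < wordOf r η n σ p.1))
      = (Finset.univ : Finset (Fin n × Fin n)).filter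
      (fun p => (p.1 < p.2 ∧ ¬ blk r η p.2.1 < wordOf r η n σ p.1)
        ∧ ¬ wordOf r η n σ p.2 < wordOf r η n σ p.1) := by
    ext p
    simp only [Finset.mem_filter, Finset.mem_univ, true_and]
    tauto
  rw [eUV] at P2
  have P5 := Finset.card_filter_add_card_filter_not
    (s := (Finset.univ : Finset (Fin n × Fin n)).filter
      (fun p => p.1 < p.2 ∧ wordOf r η n σ p.2 < wordOf r η n σ p.1))
    (p := fun p => blk r η p.1.1 < wordOf r η n σ p.1)
  rw [Finset.filter_filter, Finset.filter_filter] at P5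
  have eY : ((Finset.univ : Finset (Fin n × Fin n)).filter
      (fun p => (p.1 < p.2 ∧ wordOf r η n σ p.2 < wordOf r η n σ p.1)
        ∧ blk r η p.1.1 < wordOf r η n σ p.1))
      = (Finset.univ : Finset (Fin n × Fin n)).filter
      (fun p => p.1 < p.2 ∧ blk r η p.1.1 < wordOf r η n σ p.1
        ∧ wordOf r η n σ p.2 < wordOf r η n σ p.1) := by
    ext p
    simp only [Finset.mem_filter, Finset.mem_univ, true_and]
    tauto
  have eN : ((Finset.univ : Finset (Fin n × Fin n)).filter
      (fun p => (p.1 < p.2 ∧ wordOf r η n σ p.2 < wordOf r η n σ p.1)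
        ∧ ¬ blk r η p.1.1 < wordOf r η n σ p.1))
      = (Finset.univ : Finset (Fin n × Fin n)).filter
      (fun p => p.1 < p.2 ∧ ¬ blk r η p.1.1 < wordOf r η n σ p.1
        ∧ ¬ blk r η p.2.1 < wordOf r η n σ p.2
        ∧ wordOf r η n σ p.2 < wordOf r η n σ p.1) := by
    ext p
    simp only [Finset.mem_filter, Finset.mem_univ, true_and]
    constructor
    · rintro ⟨⟨h1, h2⟩, h3⟩
      refine ⟨h1, h3, ?_, h2⟩
      intro hc
      have s1 := (blk_lt_iff (wordOf r η n σ p.2) p.2).mp hc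
      have s2 : sIdx n r η (wordOf r η n σ p.2) ≤ sIdx n r η (wordOf r η n σ p.1) :=
        sIdx_mono (le_of_lt h2)
      have s3 : ¬ p.1.1 < sIdx n r η (wordOf r η n σ p.1) :=
        fun hh => h3 ((blk_lt_iff _ _).mpr hh)
      have s4 : p.1.1 < p.2.1 := Fin.lt_def.mp h1
      omega
    · rintro ⟨h1, h2, h3, h4⟩
      exact ⟨⟨h1, h4⟩, h2⟩
  rw [eY, eN] at P5
  have hL6 := wordIdentity (r := r) (η := η) σ
  have hInvN : invN r η n (wordOf r η n σ)
      = ((Finset.univ : Finset (Fin n × Fin n)).filter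
      (fun p => p.1 < p.2 ∧ ¬ blk r η p.1.1 < wordOf r η n σ p.1
        ∧ ¬ blk r η p.2.1 < wordOf r η n σ p.2
        ∧ wordOf r η n σ p.2 < wordOf r η n σ p.1)).card := rfl
  unfold den denh iexc
  rw [hIE, hNp, hNm, hInvN]
  push_cast
  omega
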